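/- Let q be a connected Boolean conjunctive query that contains no triad. Then the endogenous atoms of q can be arranged in a linear order g_1, ..., g_t such that for every variable x, the set of endogenous atoms in which x occurs forms a contiguous block of this order; that is, q is pseudo-linear. -/

import Mathlib

/-!
STATEMENT 9.
`q` is a connected Boolean CQ (atoms indexed by the finite type `ι`, with
argument lists `args i` of variables and an exogenous marking `exo`):
its atoms cannot be split into two nonempty groups sharing no variable.
`q` contains no triad (three distinct endogenous atoms pairwise connected by
dual-hypergraph paths avoiding the variables of the third atom).
Then the endogenous atoms can be arranged in a linear order (an ordering `ord`
injective on endogenous atoms) such that for every variable `v` the endogenous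
atoms containing `v` form a contiguous block of the order.
-/
namespace Stmt9
variable {V ι : Type} (args : ι → List V)

/-- One step in the dual hypergraph avoiding a forbidden set `P` of variables. -/
def stepP (P : V → Prop) (a b : ι) : Prop := ∃ v, v ∈ args a ∧ v ∈ args b ∧ ¬ P v

/-- Reachability avoiding `P`. -/
def RP (P : V → Prop) : ι → ι → Prop := Relation.ReflTransGen (stepP args P)

/-- Forbidden set of an atom. -/
def Av (j : ι) : V → Prop := fun v => v ∈ args j

variable {args}

lemma RP.symm {P : V → Prop} {a b : ι} (h : RP args P a b) : RP args P b a :=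
  @Std.Symm.symm _ _ (@Relation.ReflTransGen.stdSymm _ _ ⟨fun _ _ ⟨v, h1, h2, h3⟩ => ⟨v, h2, h1, h3⟩⟩) _ _ h

lemma RP.trans {P : V → Prop} {a b c : ι} (h : RP args P a b) (h' : RP args P b c) :
    RP args P a c := Relation.ReflTransGen.trans h h'

lemma RP.mono {P Q : V → Prop} (hPQ : ∀ v, P v → Q v) {a b : ι} (h : RP args Q a b) :
    RP args P a b := by
  induction h with
  | refl => exact Relation.ReflTransGen.refl
  | tail _ st ih => exact ih.tail (by obtain ⟨v, h1, h2, h3⟩ := st; exact ⟨v, h1, h2, fun hp => h3 (hPQ v hp)⟩)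

/-- The splice lemma: a walk avoiding `P` either also avoids the variables of `c`,
or it can be rerouted through `c`. -/
lemma RP.splice {P : V → Prop} {a b : ι} (h : RP args P a b) (c : ι) :
    RP args (fun v => P v ∨ v ∈ args c) a b ∨ (RP args P a c ∧ RP args P c b) := by
  induction h with
  | refl => exact Or.inl Relation.ReflTransGen.refl
  | @tail b' b hab' st ih =>
    obtain ⟨v, hv1, hv2, hv3⟩ := st
    by_cases hvc : v ∈ args c
    · right
      refine ⟨hab'.tail ⟨v, hv1, hvc, hv3⟩, Relation.ReflTransGen.single ⟨v, hvc, hv2, hv3⟩⟩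
    · rcases ih with ih | ⟨h1, h2⟩
      · exact Or.inl (ih.tail ⟨v, hv1, hv2, fun h => by rcases h with h | h; exact hv3 h; exact hvc h⟩)
      · exact Or.inr ⟨h1, h2.tail ⟨v, hv1, hv2, hv3⟩⟩

/-- A walk into `b` avoiding `b`'s own variables is trivial. -/
lemma RP.eq_of_avoid_self {P : V → Prop} {a b : ι} (h : RP args P a b)
    (hP : ∀ v ∈ args b, P v) : a = b := by
  induction h with
  | refl => rfl
  | tail _ st _ => obtain ⟨v, _, hv2, hv3⟩ := st; exact absurd (hP v hv2) hv3

/-- Avoiding-an-atom reach. -/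
abbrev Ra (j : ι) : ι → ι → Prop := RP args (Av args j)

lemma Ra.not_self {a b : ι} (hne : a ≠ b) : ¬ RP args (Av args b) a b :=
  fun h => hne (h.eq_of_avoid_self (fun _ hv => hv))

/-- splice specialized to atom-avoidance -/
lemma Ra.splice' {j : ι} {a b : ι} (h : RP args (Av args j) a b) (c : ι) :
    RP args (fun v => Av args j v ∨ v ∈ args c) a b ∨
      (RP args (Av args j) a c ∧ RP args (Av args j) c b) := h.splice c

lemma RP.mono_left {j c : ι} {a b : ι}
    (h : RP args (fun v => Av args j v ∨ v ∈ args c) a b) : RP args (Av args j) a b :=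
  h.mono (fun _ hv => Or.inl hv)

lemma RP.mono_right {j c : ι} {a b : ι}
    (h : RP args (fun v => Av args j v ∨ v ∈ args c) a b) : RP args (Av args c) a b :=
  h.mono (fun _ hv => Or.inr hv)

end Stmt9

namespace Stmt9
variable {V ι : Type} {args : ι → List V} {E : ι → Prop}

/-- Triad-freeness in reach form. -/
def TF (args : ι → List V) (E : ι → Prop) : Prop :=
  ∀ x y z : ι, E x → E y → E z → x ≠ y → x ≠ z → y ≠ z →
    RP args (Av args z) x y → RP args (Av args x) y z → RP args (Av args y) x z → False

section Grind

/-- (3): the two sides of a witness of `a` are separated by `a`. -/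
lemma sep3 (htf : TF args E) {a p q : ι} (hEa : E a) (hEp : E p) (hEq : E q)
    (hpq : p ≠ q) (hpa : p ≠ a) (hqa : q ≠ a)
    (h1 : RP args (Av args p) a q) (h2 : RP args (Av args q) a p) :
    ¬ RP args (Av args a) p q := fun hpaq =>
  htf a q p hEa hEq hEp (Ne.symm hqa) (Ne.symm hpa) (Ne.symm hpq) h1 hpaq.symm h2

/-- (6) -/
lemma sep6 (htf : TF args E) {a m y : ι} (hEa : E a) (hEm : E m) (hEy : E y)
    (hma : m ≠ a) (hya : y ≠ a) (hym : y ≠ m)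
    (h4 : RP args (Av args y) m a) (h5 : RP args (Av args a) m y) :
    ¬ RP args (Av args m) y a := fun h6 =>
  htf m a y hEm hEa hEy hma hym.symm (Ne.symm hya) h4 h6.symm h5

/-- Witness grind, case where one side of `a`'s witness equals `m` (witness pair `(m,q)`). -/
lemma casePM (htf : TF args E) {a m y q : ι} (hEa : E a) (hEm : E m) (hEy : E y) (hEq : E q)
    (hqa : q ≠ a) (hma : m ≠ a) (hya : y ≠ a) (hym : y ≠ m) (hqm : q ≠ m)
    (h1 : RP args (Av args m) a q) (h2 : RP args (Av args q) a m)
    (h4 : RP args (Av args y) m a) (h5 : RP args (Av args a) m y)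
    (h7qy : q ≠ y → ¬(RP args (Av args q) m y ∧ RP args (Av args y) m q)) : False := by
  by_cases hyq : y = q
  · subst hyq
    exact htf m a y hEm hEa hEy hma hym.symm (Ne.symm hya) h4 h1 h5
  have hqy : q ≠ y := fun h => hyq h.symm
  have h30 : RP args (Av args q) m y := by
    rcases h5.splice q with h | ⟨hmq, _⟩
    · exact h.mono_right
    · exact absurd hmq fun hmq =>
        htf m a q hEm hEa hEq hma (Ne.symm hqm) (Ne.symm hqa) h2.symm h1 hmq
  rcases h4.splice q with h31 | ⟨hmyq, _⟩
  · rcases h1.splice y with h32 | ⟨hamy, _⟩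
    · exact h7qy hqy ⟨h30, (h31.mono_left).trans (h32.mono_right)⟩
    · exact sep6 htf hEa hEm hEy hma hya hym h4 h5 hamy.symm
  · exact h7qy hqy ⟨h30, hmyq⟩

/-- Witness grind, case `y = p` (the `m`-witness second coordinate coincides with
one side of `a`'s witness). -/
lemma caseYP (htf : TF args E) {a m y q : ι} (hEa : E a) (hEm : E m) (hEy : E y) (hEq : E q)
    (hya : y ≠ a) (hqa : q ≠ a) (hma : m ≠ a) (hym : y ≠ m) (hqm : q ≠ m) (hyq : y ≠ q)
    (h1 : RP args (Av args y) a q) (h2 : RP args (Av args q) a y)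
    (h4 : RP args (Av args y) m a) (h5 : RP args (Av args a) m y)
    (h7qy : ¬(RP args (Av args q) m y ∧ RP args (Av args y) m q)) : False := by
  have h10 : RP args (Av args q) m y := by
    rcases h5.splice q with h | ⟨_, hqay⟩
    · exact h.mono_right
    · exact absurd hqay.symm (sep3 htf hEa hEy hEq hyq hya hqa h1 h2)
  rcases h1.splice m with h11 | ⟨_, hmyq⟩
  · exact h7qy ⟨h10, h4.trans (h11.mono_left)⟩
  · exact h7qy ⟨h10, hmyq⟩

/-- Witness grind, generic asymmetric case. -/
lemma caseAsym (htf : TF args E) {a m y p q : ι}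
    (hEa : E a) (hEm : E m) (hEy : E y) (hEp : E p) (hEq : E q)
    (hpq : p ≠ q) (hpa : p ≠ a) (hqa : q ≠ a) (hma : m ≠ a) (hya : y ≠ a) (hym : y ≠ m)
    (h1 : RP args (Av args p) a q) (h2 : RP args (Av args q) a p)
    (h4 : RP args (Av args y) m a) (h5 : RP args (Av args a) m y)
    (h7pq : ¬(RP args (Av args p) m q ∧ RP args (Av args q) m p))
    (h7py : ¬(RP args (Av args p) m y ∧ RP args (Av args y) m p))
    (h7qy : ¬(RP args (Av args q) m y ∧ RP args (Av args y) m q))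
    (h13 : RP args (fun v => Av args a v ∨ v ∈ args p) m y) : False := by
  have h13' : RP args (Av args p) m y := h13.mono_right
  have hn14 : ¬ RP args (Av args y) m p := fun h => h7py ⟨h13', h⟩
  have h15 : RP args (fun v => Av args y v ∨ v ∈ args p) m a := by
    rcases h4.splice p with h | ⟨hc, _⟩
    · exact h
    · exact absurd hc hn14
  rcases h2.splice m with h16a | ⟨h19, h20⟩
  · rcases h16a.splice y with h16' | ⟨hqmy, _⟩
    · exact hn14 ((h15.mono_left).trans (h16'.mono (fun v hv => Or.inr hv)))
    · exact sep6 htf hEa hEm hEy hma hya hym h4 h5 (hqmy.mono_right).symm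
  · rcases h20.splice y with h | ⟨h21, _⟩
    · exact hn14 (h.mono (fun v hv => Or.inr hv))
    · rcases h15.splice q with h26 | ⟨h28, _⟩
      · exact h7pq ⟨(h26.mono (fun v hv => Or.inl (Or.inr hv))).trans h1, h20⟩
      · exact h7qy ⟨h21, h28.mono_left⟩

/-- Main grind: if `a` has a witness `(p,q)` and `m` is otherwise extreme,
then `m` has no witness of the form `(y, a)`. -/
lemma noWitA (htf : TF args E) {a m y p q : ι}
    (hEa : E a) (hEm : E m) (hEy : E y) (hEp : E p) (hEq : E q)
    (hpq : p ≠ q) (hpa : p ≠ a) (hqa : q ≠ a) (hma : m ≠ a) (hya : y ≠ a) (hym : y ≠ m)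
    (h1 : RP args (Av args p) a q) (h2 : RP args (Av args q) a p)
    (h4 : RP args (Av args y) m a) (h5 : RP args (Av args a) m y)
    (h7pq : p ≠ m → q ≠ m → ¬(RP args (Av args p) m q ∧ RP args (Av args q) m p))
    (h7py : p ≠ m → p ≠ y → ¬(RP args (Av args p) m y ∧ RP args (Av args y) m p))
    (h7qy : q ≠ m → q ≠ y → ¬(RP args (Av args q) m y ∧ RP args (Av args y) m q)) :
    False := by
  by_cases hpm : p = m
  · subst hpm
    exact casePM htf hEa hEp hEy hEq hqa hpa hya hym (fun h => hpq h.symm) h1 h2 h4 h5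
      (fun hqy => h7qy (fun h => hpq h.symm) hqy)
  by_cases hqm : q = m
  · subst hqm
    exact casePM htf hEa hEq hEy hEp hpa hqa hya hym hpm h2 h1 h4 h5
      (fun hpy => h7py hpm hpy)
  by_cases hyp : y = p
  · subst hyp
    exact caseYP htf hEa hEm hEy hEq hya hqa hma hym hqm hpq h1 h2 h4 h5
      (h7qy hqm (fun h => hpq h.symm))
  by_cases hyq : y = q
  · subst hyq
    exact caseYP htf hEa hEm hEy hEp hya hpa hma hym hpm (fun h => hpq h.symm) h2 h1 h4 h5
      (h7py hpm hpq)
  · rcases h5.splice p with hSp | ⟨_, hpay⟩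
    · exact caseAsym htf hEa hEm hEy hEp hEq hpq hpa hqa hma hya hym h1 h2 h4 h5
        (h7pq hpm hqm) (h7py hpm (fun h => hyp h.symm)) (h7qy hqm (fun h => hyq h.symm)) hSp
    · rcases h5.splice q with hSq | ⟨_, hqay⟩
      · exact caseAsym htf hEa hEm hEy hEq hEp (Ne.symm hpq) hqa hpa hma hya hym h2 h1 h4 h5
          (fun ⟨u1, u2⟩ => h7pq hpm hqm ⟨u2, u1⟩) (h7qy hqm (fun h => hyq h.symm))
          (h7py hpm (fun h => hyp h.symm)) hSq
      · exact sep3 htf hEa hEp hEq hpq hpa hqa h1 h2 (hpay.trans hqay.symm)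

/-- g1 grind: the chosen `m` also shields `ω` from `a`. -/
lemma shieldOmega {a m p q ω : ι}
    (hpq : p ≠ q)
    (h1 : RP args (Av args p) a q) (h2 : RP args (Av args q) a p)
    (hBp : p ≠ m → ¬ RP args (Av args m) ω p) (hBq : q ≠ m → ¬ RP args (Av args m) ω q)
    (h7pq : p ≠ m → q ≠ m → ¬(RP args (Av args p) m q ∧ RP args (Av args q) m p))
    (hW : RP args (Av args m) ω a) : False := by
  by_cases hqm : q = m
  · subst hqm
    exact hBp hpq (hW.trans h2)
  by_cases hpm : p = m
  · subst hpm
    exact hBq hqm (hW.trans h1)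
  rcases h1.splice m with h | ⟨_, hmpq⟩
  · exact hBq hqm (hW.trans h.mono_right)
  · rcases h2.splice m with h' | ⟨_, hmqp⟩
    · exact hBp hpm (hW.trans h'.mono_right)
    · exact h7pq hpm hqm ⟨hmpq, hmqp⟩

end Grind

section Exists
variable [DecidableEq ι]

/-- `m` is extreme with respect to pool `F`: no witness pair in `F`. -/
def Ext (args : ι → List V) (m : ι) (F : Finset ι) : Prop :=
  ∀ y ∈ F, ∀ c ∈ F, y ≠ c → ¬(RP args (Av args y) m c ∧ RP args (Av args c) m y)

lemma Ext.mono {m : ι} {F G : Finset ι} (h : Ext args m F) (hGF : G ⊆ F) :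
    Ext args m G := fun y hy c hc hyc => h y (hGF hy) c (hGF hc) hyc

/-- Patch an extreme element of `F.erase a` to one of `F`, given a witness for `a`. -/
lemma ext_patch (htf : TF args E) {F : Finset ι} {a m p q : ι}
    (hFE : ∀ i ∈ F, E i) (ha : a ∈ F) (hm : m ∈ F.erase a)
    (hp : p ∈ F.erase a) (hq : q ∈ F.erase a) (hpq : p ≠ q)
    (h1 : RP args (Av args p) a q) (h2 : RP args (Av args q) a p)
    (hmext : Ext args m ((F.erase a).erase m)) : Ext args m (F.erase m) := by
  have hma : m ≠ a := (Finset.mem_erase.1 hm).1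
  have hmF : m ∈ F := (Finset.mem_erase.1 hm).2
  have hpa : p ≠ a := (Finset.mem_erase.1 hp).1
  have hqa : q ≠ a := (Finset.mem_erase.1 hq).1
  have hpF : p ∈ F := (Finset.mem_erase.1 hp).2
  have hqF : q ∈ F := (Finset.mem_erase.1 hq).2
  intro y hy c hc hyc ⟨w1, w2⟩
  have hyF : y ∈ F := (Finset.mem_erase.1 hy).2
  have hym : y ≠ m := (Finset.mem_erase.1 hy).1
  have hcF : c ∈ F := (Finset.mem_erase.1 hc).2
  have hcm : c ≠ m := (Finset.mem_erase.1 hc).1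
  have memq : ∀ x, x ∈ F → x ≠ a → x ≠ m → x ∈ (F.erase a).erase m :=
    fun x h1' h2' h3' => Finset.mem_erase.2 ⟨h3', Finset.mem_erase.2 ⟨h2', h1'⟩⟩
  by_cases hca : c = a
  · subst hca
    exact noWitA htf (hFE _ ha) (hFE _ hmF) (hFE _ hyF) (hFE _ hpF) (hFE _ hqF)
      hpq hpa hqa hma hyc hym h1 h2 w1 w2
      (fun hpm hqm => hmext p (memq p hpF hpa hpm) q (memq q hqF hqa hqm) hpq)
      (fun hpm hpy => hmext p (memq p hpF hpa hpm) y (memq y hyF hyc hym) hpy)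
      (fun hqm hqy => hmext q (memq q hqF hqa hqm) y (memq y hyF hyc hym) hqy)
  by_cases hya : y = a
  · subst hya
    exact noWitA htf (hFE _ ha) (hFE _ hmF) (hFE _ hcF) (hFE _ hpF) (hFE _ hqF)
      hpq hpa hqa hma (fun h => hyc h.symm) hcm h1 h2 w2 w1
      (fun hpm hqm => hmext p (memq p hpF hpa hpm) q (memq q hqF hqa hqm) hpq)
      (fun hpm hpc => hmext p (memq p hpF hpa hpm) c (memq c hcF (fun h => hyc h.symm) hcm) hpc)
      (fun hqm hqc => hmext q (memq q hqF hqa hqm) c (memq c hcF (fun h => hyc h.symm) hcm) hqc)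
  · exact hmext y (memq y hyF hya hym) c (memq c hcF hca hcm) hyc ⟨w1, w2⟩

/-- Minimum of a finite total transitive relation. -/
lemma exists_bot (le : ι → ι → Prop) (htr : ∀ {x y z}, le x y → le y z → le x z) :
    ∀ (F : Finset ι), F.Nonempty → (∀ x ∈ F, ∀ z ∈ F, le x z ∨ le z x) →
    ∃ m ∈ F, ∀ x ∈ F, le m x := by
  intro F
  induction F using Finset.induction_on with
  | empty => exact fun h => absurd h (by simp)
  | @insert b G hbG ih =>
    intro _ htot
    rcases G.eq_empty_or_nonempty with rfl | hGne
    · refine ⟨b, Finset.mem_insert_self _ _, ?_⟩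
      intro x hx
      rcases Finset.mem_insert.1 hx with rfl | hx'
      · rcases htot x (Finset.mem_insert_self _ _) x (Finset.mem_insert_self _ _) with h | h <;> exact h
      · exact absurd hx' (by simp)
    · obtain ⟨m, hmG, hmin⟩ := ih hGne
        (fun x hx z hz => htot x (Finset.mem_insert_of_mem hx) z (Finset.mem_insert_of_mem hz))
      rcases htot m (Finset.mem_insert_of_mem hmG) b (Finset.mem_insert_self _ _) with h | h
      · refine ⟨m, Finset.mem_insert_of_mem hmG, ?_⟩
        intro x hx
        rcases Finset.mem_insert.1 hx with rfl | hx'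
        · exact h
        · exact hmin x hx'
      · refine ⟨b, Finset.mem_insert_self _ _, ?_⟩
        intro x hx
        rcases Finset.mem_insert.1 hx with rfl | hx'
        · rcases htot x (Finset.mem_insert_self _ _) x (Finset.mem_insert_self _ _) with h' | h' <;> exact h'
        · exact htr h (hmin x hx')

/-- LEMMA A: every nonempty endogenous pool has an extreme element. -/
lemma exists_extreme (htf : TF args E) (F : Finset ι) :
    (∀ i ∈ F, E i) → F.Nonempty → ∃ m ∈ F, Ext args m (F.erase m) := by
  induction F using Finset.strongInduction with
  | _ F ih =>
    intro hFE hne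
    obtain ⟨a, ha⟩ := hne
    by_cases hext : Ext args a (F.erase a)
    · exact ⟨a, ha, hext⟩
    · rw [Ext] at hext
      push_neg at hext
      obtain ⟨p, hp, q, hq, hpq, h1, h2⟩ := hext
      have hFsub : F.erase a ⊂ F := Finset.erase_ssubset ha
      obtain ⟨m, hm, hmext⟩ := ih (F.erase a) hFsub
        (fun i hi => hFE i (Finset.mem_of_mem_erase hi)) ⟨p, hp⟩
      exact ⟨m, Finset.mem_of_mem_erase hm,
        ext_patch htf hFE ha hm hp hq hpq h1 h2 hmext⟩

/-- CORE: given an extreme reference `ω` behind the pool, there is an extreme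
element of the pool that moreover shields `ω` from the rest of the pool. -/
lemma exists_extreme_shield (htf : TF args E) (ω : ι) (F : Finset ι) :
    (∀ i ∈ F, E i) → ω ∉ F → Ext args ω F → F.Nonempty →
    ∃ m ∈ F, (∀ x ∈ F, x ≠ m → ¬ RP args (Av args m) ω x) ∧ Ext args m (F.erase m) := by
  induction F using Finset.strongInduction with
  | _ F ih =>
    intro hFE hωF hΩ hne
    -- the bottom element of the ⊴ preorder
    obtain ⟨a, ha, hbot⟩ := exists_bot (fun x z => ¬ RP args (Av args x) ω z)
      (fun {x y z} hxy hyz hxz => by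
        rcases hxz.splice y with h | ⟨h, _⟩
        · exact hyz h.mono_right
        · exact hxy h) F hne
      (fun x hx z hz => by
        by_cases hxz : x = z
        · subst hxz
          exact Or.inl (Ra.not_self (fun h => hωF (h ▸ hx)))
        · rcases Classical.em (RP args (Av args x) ω z) with h | h
          · exact Or.inr (fun h' => hΩ x hx z hz hxz ⟨h, h'⟩)
          · exact Or.inl h)
    by_cases hext : Ext args a (F.erase a)
    · exact ⟨a, ha, fun x hx _ => (hbot x hx) ∘ RP.symm ∘ RP.symm, hext⟩
    · rw [Ext] at hext
      push_neg at hext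
      obtain ⟨p, hp, q, hq, hpq, h1, h2⟩ := hext
      have hFsub : F.erase a ⊂ F := Finset.erase_ssubset ha
      obtain ⟨m, hm, hshield, hmext⟩ := ih (F.erase a) hFsub
        (fun i hi => hFE i (Finset.mem_of_mem_erase hi))
        (fun h => hωF (Finset.mem_of_mem_erase h))
        (hΩ.mono (Finset.erase_subset _ _)) ⟨p, hp⟩
      have hma : m ≠ a := (Finset.mem_erase.1 hm).1
      have memq : ∀ x, x ∈ F.erase a → x ≠ m → x ∈ (F.erase a).erase m :=
        fun x h1' h3' => Finset.mem_erase.2 ⟨h3', h1'⟩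
      refine ⟨m, Finset.mem_of_mem_erase hm, ?_,
        ext_patch htf hFE ha hm hp hq hpq h1 h2 hmext⟩
      intro x hx hxm
      by_cases hxa : x = a
      · subst hxa
        exact fun hW => shieldOmega hpq h1 h2
          (fun hpm => hshield p hp hpm)
          (fun hqm => hshield q hq hqm)
          (fun hpm hqm => hmext p (memq p hp hpm) q (memq q hq hqm) hpq) hW
      · exact hshield x (Finset.mem_erase.2 ⟨hxa, hx⟩) hxm

/-- Assembly: build the middle-separated order by repeatedly picking an extreme,
shielding element. -/
lemma build (htf : TF args E) (F : Finset ι) : ∀ (S : List ι),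
    (∀ i ∈ F, E i) → (∀ b ∈ S, b ∉ F) →
    (∀ x ∈ F, ∀ a b : ι, [a, b].Sublist S → ¬ RP args (Av args a) x b) →
    (∀ x b z : ι, [x, b, z].Sublist S → ¬ RP args (Av args b) x z) →
    (∀ ω S', S = ω :: S' → Ext args ω F) →
    ∃ L : List ι, (∀ x, x ∈ L ↔ x ∈ F) ∧ L.Nodup ∧
      (∀ x b z : ι, [x, b, z].Sublist (L ++ S) → ¬ RP args (Av args b) x z) := by
  induction F using Finset.strongInduction with
  | _ F ih =>
    intro S hFE hdisj inv1 inv2 inv3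
    rcases F.eq_empty_or_nonempty with rfl | hne
    · exact ⟨[], by simp, List.nodup_nil, fun x b z h => inv2 x b z h⟩
    · -- choose the next element m (last among F)
      have hm : ∃ m ∈ F, (∀ x ∈ F, x ≠ m → ∀ ω S', S = ω :: S' →
          ¬ RP args (Av args m) ω x) ∧ Ext args m (F.erase m) := by
        cases S with
        | nil =>
          obtain ⟨m, hm, hext⟩ := exists_extreme htf F hFE hne
          exact ⟨m, hm, fun x _ _ ω S' h => by simp at h, hext⟩
        | cons ω S' =>
          obtain ⟨m, hm, hsh, hext⟩ := exists_extreme_shield htf ω F hFE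
            (fun h => hdisj ω (List.mem_cons_self) h)
            (inv3 ω S' rfl) hne
          exact ⟨m, hm, fun x hx hxm ω' S'' h => by
            obtain ⟨rfl, rfl⟩ := List.cons.inj h.symm
            exact hsh x hx hxm, hext⟩
      obtain ⟨m, hmF, hsh, hext⟩ := hm
      have hsub : F.erase m ⊂ F := Finset.erase_ssubset hmF
      obtain ⟨L', hmem', hnd', hms'⟩ := ih (F.erase m) hsub (m :: S)
        (fun i hi => hFE i (Finset.mem_of_mem_erase hi))
        (fun b hb => by
          rcases List.mem_cons.1 hb with rfl | hb'
          · exact Finset.notMem_erase _ _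
          · exact fun h => hdisj b hb' (Finset.mem_of_mem_erase h))
        (fun x hx a b hab => by
          have hxF : x ∈ F := Finset.mem_of_mem_erase hx
          have hxm : x ≠ m := (Finset.mem_erase.1 hx).1
          rcases List.sublist_cons_iff.1 hab with hab' | ⟨r, hr, hrS⟩
          · exact inv1 x hxF a b hab'
          · -- a = m, [b] <+ S
            obtain ⟨rfl, rfl⟩ : a = m ∧ r = [b] := by
              cases hr; exact ⟨rfl, rfl⟩
            cases S with
            | nil => simp at hrS
            | cons ω S' =>
              intro hR
              rcases List.sublist_cons_iff.1 hrS with hbS' | ⟨r', hr', hr'S⟩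
              · -- b occurs in S' (after ω)
                rcases hR.splice ω with h | ⟨h1, _⟩
                · exact inv1 x hxF ω b
                    (List.Sublist.cons₂ ω (List.singleton_sublist.2 (hbS'.mem (List.mem_singleton_self b)))) (h.mono_right)
                · exact hsh x hxF hxm ω S' rfl h1.symm
              · -- b = ω
                obtain ⟨rfl, _⟩ : b = ω ∧ r' = [] := by cases hr'; exact ⟨rfl, rfl⟩
                exact hsh x hxF hxm b S' rfl hR.symm)
        (fun x b z hxbz => by
          rcases List.sublist_cons_iff.1 hxbz with h | ⟨r, hr, hrS⟩
          · exact inv2 x b z h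
          · obtain ⟨rfl, rfl⟩ : x = m ∧ r = [b, z] := by cases hr; exact ⟨rfl, rfl⟩
            exact inv1 _ hmF b z hrS)
        (fun ω S' h => by
          obtain ⟨rfl, _⟩ : ω = m ∧ S' = S := by cases h; exact ⟨rfl, rfl⟩
          exact hext)
      refine ⟨L' ++ [m], ?_, ?_, ?_⟩
      · intro x
        simp only [List.mem_append, List.mem_singleton, hmem', Finset.mem_erase]
        constructor
        · rintro (⟨_, h⟩ | rfl)
          · exact h
          · exact hmF
        · intro hx
          by_cases hxm : x = m
          · exact Or.inr hxm
          · exact Or.inl ⟨hxm, hx⟩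
      · refine List.Nodup.append hnd' (List.nodup_singleton m) ?_
        intro x hx hx'
        rw [List.mem_singleton] at hx'
        subst hx'
        exact (Finset.mem_erase.1 ((hmem' x).1 hx)).1 rfl
      · intro x b z h
        refine hms' x b z ?_
        rwa [List.append_assoc, List.singleton_append] at h

end Exists
end Stmt9

namespace Stmt9

lemma sublist_triple {α : Type*} [DecidableEq α] {L : List α} {i j k : α}
    (hi : i ∈ L) (hj : j ∈ L) (hk : k ∈ L)
    (h1 : L.idxOf i < L.idxOf j) (h2 : L.idxOf j < L.idxOf k) :
    [i, j, k].Sublist L := by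
  have hi' := List.idxOf_lt_length_iff.2 hi
  have hj' := List.idxOf_lt_length_iff.2 hj
  have hk' := List.idxOf_lt_length_iff.2 hk
  have hsub := List.map_getElem_sublist (l := L)
    (is := [⟨_, hi'⟩, ⟨_, hj'⟩, ⟨_, hk'⟩])
    (by simp [List.pairwise_cons, h1, h2, lt_trans h1 h2])
  simpa [List.getElem_idxOf] using hsub

end Stmt9

theorem stmt_9 {Rn V ι : Type} [Fintype ι]
    (ar : Rn → ℕ)
    (rel : ι → Rn) (args : ι → List V)
    (hlen : ∀ i, (args i).length = ar (rel i))
    (exo : ι → Prop)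
    (hconn : ¬ ∃ S : Set ι, S.Nonempty ∧ Sᶜ.Nonempty ∧
      ∀ i ∈ S, ∀ j ∈ Sᶜ, ¬ ∃ v, v ∈ args i ∧ v ∈ args j)
    (htriadfree : ¬ ∃ s₀ s₁ s₂ : ι, s₀ ≠ s₁ ∧ s₀ ≠ s₂ ∧ s₁ ≠ s₂ ∧
      ¬ exo s₀ ∧ ¬ exo s₁ ∧ ¬ exo s₂ ∧
      Relation.ReflTransGen
        (fun a b => ∃ v, v ∈ args a ∧ v ∈ args b ∧ v ∉ args s₂) s₀ s₁ ∧
      Relation.ReflTransGen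
        (fun a b => ∃ v, v ∈ args a ∧ v ∈ args b ∧ v ∉ args s₀) s₁ s₂ ∧
      Relation.ReflTransGen
        (fun a b => ∃ v, v ∈ args a ∧ v ∈ args b ∧ v ∉ args s₁) s₀ s₂) :
    ∃ ord : ι → ℕ,
      (∀ i j, ¬ exo i → ¬ exo j → ord i = ord j → i = j) ∧
      (∀ (v : V) (i j k : ι), ¬ exo i → ¬ exo j → ¬ exo k →
        ord i ≤ ord j → ord j ≤ ord k → v ∈ args i → v ∈ args k → v ∈ args j) := by
  classical
  have htf : Stmt9.TF args (fun i => ¬ exo i) := fun x y z hx hy hz hxy hxz hyz r1 r2 r3 =>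
    htriadfree ⟨x, y, z, hxy, hxz, hyz, hx, hy, hz, r1, r2, r3⟩
  obtain ⟨L, hmem, hnd, hms⟩ := Stmt9.build htf (Finset.univ.filter (fun i => ¬ exo i)) []
    (fun i hi => (Finset.mem_filter.1 hi).2)
    (by simp)
    (fun x hx a b hab => absurd hab (by simp))
    (fun x b z h => absurd h (by simp))
    (fun ω S' h => by simp at h)
  rw [List.append_nil] at hms
  have hmemL : ∀ i, ¬ exo i → i ∈ L :=
    fun i hi => (hmem i).2 (Finset.mem_filter.2 ⟨Finset.mem_univ _, hi⟩)
  refine ⟨fun i => L.idxOf i, ?_, ?_⟩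
  · intro i j hi hj hij
    exact (List.idxOf_inj (hmemL i hi)).1 hij
  · intro v i j k hi hj hk hij hjk hvi hvk
    by_contra hvj
    have hstep : Stmt9.RP args (Stmt9.Av args j) i k :=
      Relation.ReflTransGen.single ⟨v, hvi, hvk, hvj⟩
    have hiL := hmemL i hi
    have hjL := hmemL j hj
    have hkL := hmemL k hk
    have hij' : i ≠ j := fun h => hvj (h ▸ hvi)
    have hjk' : j ≠ k := fun h => hvj (h ▸ hvk)
    have h1 : L.idxOf i < L.idxOf j :=
      lt_of_le_of_ne hij (fun h => hij' ((List.idxOf_inj hiL).1 h))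
    have h2 : L.idxOf j < L.idxOf k :=
      lt_of_le_of_ne hjk (fun h => hjk' ((List.idxOf_inj hjL).1 h))
    exact hms i j k (Stmt9.sublist_triple hiL hjL hkL h1 h2) hstep
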